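/- Let X be a smooth projective variety over C of dimension n, and suppose a descending filtration F^• on CH^r(X,m)_Q is defined via an injective comparison into graded pieces Ext^ν(Q(0), H^{2r−m−ν}(X)(r)) compatible with the Lefschetz operator L, where the hard Lefschetz isomorphism L^{n−2r+m+ν} : H^{2r−m−ν}(X)(r) ≅ H^{2n−2r+m+ν}(X)(n−r) holds. If CH^{s}(X,m) = 0 whenever s > n + m, then Gr^ν_F CH^r(X,m)_Q = 0 for all ν ≥ r+1. -/
import Mathlib


/-!
STATEMENT 18: (Proposition "filt81"(4).)  X a smooth projective variety over ℂ of
dimension n.  A descending filtration F^• on CH^r(X,m)_ℚ is defined via injective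
comparison maps from the graded pieces Gr^ν_F CH^s(X,m)_ℚ into the extension groups
Ext^ν(ℚ(0), H^{2s−m−ν}(X)(s)), compatibly with the Lefschetz operator
L^{n−2s+m+ν} : CH^s(X,m) → CH^{n−s+m+ν}(X,m), for which the hard Lefschetz
isomorphism Ext^ν(ℚ(0), H^{2s−m−ν}(X)(s)) ≅ Ext^ν(ℚ(0), H^{2n−2s+m+ν}(X)(n−s))
holds.  If CH^s(X,m) = 0 whenever s > n + m, then Gr^ν_F CH^r(X,m)_ℚ = 0 for all
ν ≥ r + 1.

We formalize the data of this commutative diagram abstractly: `Gr ν s` is the graded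
piece Gr^ν_F CH^s(X,m)_ℚ and `E ν s` is Ext^ν(ℚ(0), H^{2s−m−ν}(X)(s)).
-/

theorem graded_piece_vanishes_of_hard_lefschetz
    (n m r : ℕ) (hr : r ≤ n)
    (Gr : ℕ → ℕ → Type) [∀ ν s, AddCommGroup (Gr ν s)] [∀ ν s, Module ℚ (Gr ν s)]
    (E : ℕ → ℕ → Type) [∀ ν s, AddCommGroup (E ν s)] [∀ ν s, Module ℚ (E ν s)]
    -- the (injective) higher Abel–Jacobi maps on graded pieces
    (ι : ∀ ν s, Gr ν s →ₗ[ℚ] E ν s)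
    (hι : ∀ ν s, Function.Injective (ι ν s))
    -- the Lefschetz operator L^{n−2s+m+ν} on Chow groups, raising codimension to n−s+m+ν
    (Lchow : ∀ ν s, Gr ν s →ₗ[ℚ] Gr ν (n - s + m + ν))
    -- the Lefschetz operator on the Ext groups
    (Lext : ∀ ν s, E ν s →ₗ[ℚ] E ν (n - s + m + ν))
    -- hard Lefschetz: the right vertical arrow is bijective
    (hhard : ∀ ν s, Function.Bijective (Lext ν s))
    -- commutativity of the diagram
    (hcomm : ∀ ν s x, ι ν (n - s + m + ν) (Lchow ν s x) = Lext ν s (ι ν s x))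
    -- vanishing of Chow groups (hence of their graded pieces) in codimension > n + m
    (hvanish : ∀ ν s, n + m < s → Subsingleton (Gr ν s)) :
    ∀ ν, r + 1 ≤ ν → Subsingleton (Gr ν r) := by
  intro ν hν
  have hsub : Subsingleton (Gr ν (n - r + m + ν)) := by
    apply hvanish
    omega
  constructor
  intro a b
  apply hι ν r
  apply (hhard ν r).1
  rw [← hcomm, ← hcomm]
  congr 1
  exact hsub.elim _ _
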